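/- Let $A$ be a commutative Noetherian ring and $F$ a $J$-good filtration of ideals in $A$. Then the Rees algebra $\mathfrak R(F; A) = \bigoplus_{n\ge 0} (F)_n t^n \subseteq A[t]$ is a finitely generated module over the Rees algebra $\mathfrak R(J; A) = A[Jt]$; in particular $\mathfrak R(F;A)$ is a Noetherian ring. -/

import Mathlib

open Polynomial

/-- The Rees algebra `⊕ₙ (F)ₙ tⁿ` of a filtration of ideals `F`, as the subalgebra of `A[X]`
of polynomials whose `n`-th coefficient lies in `(F)ₙ`. -/
def filtrationRees {A : Type*} [CommRing A] (F : ℕ → Ideal A) (hF0 : F 0 = ⊤)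
    (hmul : ∀ m n : ℕ, F m * F n ≤ F (m + n)) : Subalgebra A A[X] where
  carrier := {p : A[X] | ∀ n : ℕ, p.coeff n ∈ F n}
  add_mem' := by
    intro p q hp hq n
    rw [coeff_add]
    exact (F n).add_mem (hp n) (hq n)
  mul_mem' := by
    intro p q hp hq n
    rw [coeff_mul]
    refine Ideal.sum_mem _ ?_
    rintro ⟨i, j⟩ hc
    have hij : i + j = n := Finset.HasAntidiagonal.mem_antidiagonal.mp hc
    exact hij ▸ hmul i j (Ideal.mul_mem_mul (hp i) (hq j))
  algebraMap_mem' := by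
    intro a n
    rw [Polynomial.algebraMap_eq, coeff_C]
    split_ifs with h
    · rw [h, hF0]; trivial
    · exact (F n).zero_mem


theorem filtrationRees_finite_over_reesAlgebra {A : Type*} [CommRing A] [IsNoetherianRing A]
    (F : ℕ → Ideal A) (J : Ideal A)
    (hF0 : F 0 = ⊤) (hanti : Antitone F) (hmul : ∀ m n : ℕ, F m * F n ≤ F (m + n))
    (hgood1 : ∀ n : ℕ, J * F n ≤ F (n + 1))
    (hgood2 : ∃ N : ℕ, ∀ n ≥ N, F (n + 1) = J * F n) :
    (∃ s : Finset A[X], (↑s : Set A[X]) ⊆ (filtrationRees F hF0 hmul : Set A[X]) ∧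
        ∀ p ∈ filtrationRees F hF0 hmul,
          p ∈ Submodule.span (reesAlgebra J) (s : Set A[X])) ∧
      IsNoetherianRing (filtrationRees F hF0 hmul) := by
  classical
  -- package `F` as an `Ideal.Filtration`
  let Fil : J.Filtration A :=
    { N := F
      mono := fun i => hanti (Nat.le_succ i)
      smul_le := fun i => by rw [Ideal.smul_eq_mul]; exact hgood1 i }
  have hStable : Fil.Stable := by
    obtain ⟨N, hN⟩ := hgood2
    exact ⟨N, fun n hn => by
      show J • F n = F (n + 1)
      rw [Ideal.smul_eq_mul]; exact (hN n hn).symm⟩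
  have hFG : Fil.submodule.FG :=
    (Fil.submodule_fg_iff_stable (fun i => IsNoetherian.noetherian _)).mpr hStable
  obtain ⟨t, ht⟩ := hFG
  haveI : IsScalarTower (reesAlgebra J) A[X] (PolynomialModule A A) :=
    ⟨fun r x m => by rw [Subalgebra.smul_def, Subalgebra.smul_def, smul_smul, smul_eq_mul]⟩
  haveI : LinearMap.CompatibleSMul (PolynomialModule A A) A[X] (reesAlgebra J) A[X] :=
    LinearMap.IsScalarTower.compatibleSMul
  let e : PolynomialModule A A ≃ₗ[reesAlgebra J] A[X] :=
    (PolynomialModule.equivPolynomialSelf (R := A)).restrictScalars (reesAlgebra J)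
  have hecoeff : ∀ (f : PolynomialModule A A) (n : ℕ), (e f).coeff n = f.coeff n := fun _ _ => rfl
  have hesymm : ∀ (p : A[X]) (n : ℕ), (e.symm p).coeff n = p.coeff n := fun _ _ => rfl
  set s : Finset A[X] := t.image e with hs
  have hspan : Submodule.span (reesAlgebra J) (s : Set A[X])
      = Fil.submodule.map (e : PolynomialModule A A →ₗ[reesAlgebra J] A[X]) := by
    rw [hs, Finset.coe_image, ← ht]; exact Submodule.span_image (e : PolynomialModule A A →ₗ[reesAlgebra J] A[X])
  have hsubset : (↑s : Set A[X]) ⊆ (filtrationRees F hF0 hmul : Set A[X]) := by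
    intro x hx
    rw [hs, Finset.coe_image] at hx
    obtain ⟨f, hf, rfl⟩ := hx
    have hfmem : f ∈ Fil.submodule := ht ▸ Submodule.subset_span hf
    intro n
    rw [hecoeff]
    exact (Fil.mem_submodule f).mp hfmem n
  have hmem : ∀ p ∈ filtrationRees F hF0 hmul,
      p ∈ Submodule.span (reesAlgebra J) (s : Set A[X]) := by
    intro p hp
    rw [hspan]
    rw [Submodule.mem_map_equiv]
    rw [Fil.mem_submodule]
    intro i
    rw [hesymm]
    exact hp i
  refine ⟨⟨s, hsubset, hmem⟩, ?_⟩
  -- Noetherianity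
  have hJF : ∀ n : ℕ, J ^ n ≤ F n := by
    intro n
    induction n with
    | zero => rw [hF0]; exact le_top
    | succ n ih =>
      rw [pow_succ, mul_comm]
      exact le_trans (Ideal.mul_mono le_rfl ih) (hgood1 n)
  have hle : reesAlgebra J ≤ filtrationRees F hF0 hmul := by
    intro p hp n
    exact hJF n ((mem_reesAlgebra_iff J p).mp hp n)
  obtain ⟨s0, hs0⟩ := reesAlgebra.fg (IsNoetherian.noetherian J)
  have hSfg : (filtrationRees F hF0 hmul).FG := by
    refine ⟨s0 ∪ s, le_antisymm (Algebra.adjoin_le ?_) ?_⟩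
    · intro x hx
      rw [Finset.coe_union] at hx
      rcases hx with hx | hx
      · exact hle (hs0 ▸ Algebra.subset_adjoin hx)
      · exact hsubset hx
    · intro p hp
      have hsp := hmem p hp
      have hsub : (s : Set A[X]) ⊆ (Algebra.adjoin A (↑(s0 ∪ s) : Set A[X]) : Set A[X]) := by
        intro x hx
        exact Algebra.subset_adjoin (by rw [Finset.coe_union]; exact Or.inr hx)
      refine Submodule.span_induction (p := fun x _ => x ∈ Algebra.adjoin A (↑(s0 ∪ s) : Set A[X]))
        (fun x hx => hsub hx) (Subalgebra.zero_mem _)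
        (fun x y _ _ hx hy => Subalgebra.add_mem _ hx hy) ?_ hsp
      intro r x _ hx
      rw [Subalgebra.smul_def]
      refine Subalgebra.mul_mem _ ?_ hx
      have : (r : A[X]) ∈ Algebra.adjoin A (↑s0 : Set A[X]) := by rw [hs0]; exact r.2
      exact Algebra.adjoin_mono (by intro y hy; rw [Finset.coe_union]; exact Or.inl hy) this
  have : Algebra.FiniteType A (filtrationRees F hF0 hmul) :=
    ⟨(filtrationRees F hF0 hmul).fg_top.mpr hSfg⟩
  exact Algebra.FiniteType.isNoetherianRing A _
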